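/- arXiv:2406.12664 — 5 statements merged into one kernel-verified Lean document; each statement's English description precedes it below -/
import Mathlib

section
/- Let V be a finite-dimensional real inner product space of dimension n ≥ 1, let W be a real inner product space, and let α : V × V → W be a symmetric bilinear map that is traceless, i.e. for some orthonormal basis (e₁,…,eₙ) of V one has Σᵢ α(eᵢ,eᵢ) = 0. If a vector Y ∈ V satisfies ⟨α(Y,Y), α(X,X)⟩ = ‖α(X,Y)‖² for every X ∈ V, then α(X,Y) = 0 for every X ∈ V. -/
open scoped RealInnerProductSpace

/-- Algebraic core of Lemma 2.1: a traceless symmetric bilinear map `α` on a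
finite-dimensional real inner product space satisfies: if
`⟪α(Y,Y), α(X,X)⟫ = ‖α(X,Y)‖²` for all `X`, then `α(X,Y) = 0` for all `X`. -/
theorem stmt_0 {V W : Type*} [NormedAddCommGroup V] [InnerProductSpace ℝ V]
    [FiniteDimensional ℝ V] [NormedAddCommGroup W] [InnerProductSpace ℝ W]
    (n : ℕ) (hn : 1 ≤ n) (hdim : Module.finrank ℝ V = n)
    (α : V →ₗ[ℝ] V →ₗ[ℝ] W)
    (hsymm : ∀ X Y : V, α X Y = α Y X)
    (e : OrthonormalBasis (Fin n) ℝ V)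
    (htraceless : ∑ i, α (e i) (e i) = 0)
    (Y : V)
    (hY : ∀ X : V, ⟪α Y Y, α X X⟫ = ‖α X Y‖ ^ 2) :
    ∀ X : V, α X Y = 0 := by
  have hsum : ∑ i, ‖α (e i) Y‖ ^ 2 = 0 := by
    have : ∑ i, ⟪α Y Y, α (e i) (e i)⟫ = ∑ i, ‖α (e i) Y‖ ^ 2 := by
      exact Finset.sum_congr rfl fun i _ => hY (e i)
    rw [← this, ← inner_sum, htraceless, inner_zero_right]
  have hzero : ∀ i, α (e i) Y = 0 := by
    intro i
    have h := (Finset.sum_eq_zero_iff_of_nonneg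
      (fun i _ => by positivity)).mp hsum i (Finset.mem_univ i)
    have : ‖α (e i) Y‖ = 0 := by nlinarith [norm_nonneg (α (e i) Y)]
    simpa using this
  have hflip : α.flip Y = 0 := by
    apply Module.Basis.ext e.toBasis
    intro i
    simpa using hzero i
  intro X
  have : α.flip Y X = 0 := by rw [hflip]; rfl
  simpa using this
end

section
/- Let n be a natural number, let C₀ be a real n × n matrix, and define J₀(t) := (cosh t) • 1 − (sinh t) • C₀, where 1 is the identity matrix. Define C(t) := −((sinh t) • 1 − (cosh t) • C₀) * (J₀(t))⁻¹. Then J₀(0) = 1 is invertible, C(0) = C₀, and at every t ∈ ℝ at which J₀(t) is invertible, the matrix-valued function C is differentiable at t with derivative C(t) * C(t) − 1; that is, C satisfies the Riccati equation C′ = C² − I. -/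
open Matrix

attribute [local instance] Matrix.normedAddCommGroup Matrix.normedSpace

lemma matMul_hasDerivAt {n : ℕ} {A B : ℝ → Matrix (Fin n) (Fin n) ℝ}
    {A' B' : Matrix (Fin n) (Fin n) ℝ} {t : ℝ}
    (hA : HasDerivAt A A' t) (hB : HasDerivAt B B' t) :
    HasDerivAt (fun u => A u * B u) (A' * B t + A t * B') t := by
  refine hasDerivAt_iff_tendsto_slope.mpr ?_
  have hA' : Filter.Tendsto (slope A t) (nhdsWithin t {t}ᶜ) (nhds A') :=
    hasDerivAt_iff_tendsto_slope.mp hA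
  have hB' : Filter.Tendsto (slope B t) (nhdsWithin t {t}ᶜ) (nhds B') :=
    hasDerivAt_iff_tendsto_slope.mp hB
  have hBc : Filter.Tendsto B (nhdsWithin t {t}ᶜ) (nhds (B t)) :=
    hB.continuousAt.tendsto.mono_left nhdsWithin_le_nhds
  have heq : ∀ᶠ s in nhdsWithin t {t}ᶜ,
      slope A t s * B s + A t * slope B t s = slope (fun u => A u * B u) t s := by
    filter_upwards [self_mem_nhdsWithin] with s _
    simp only [slope_def_module, Matrix.smul_mul, Matrix.mul_smul, ← smul_add,
      sub_mul, mul_sub]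
    abel_nf
  exact Filter.Tendsto.congr' heq ((hA'.mul hBc).add (tendsto_const_nhds.mul hB'))

/-- Formula (2.1) of Proposition 3.1: with `J₀(t) = (cosh t) I − (sinh t) C₀` and
`C(t) = −J₀′(t) J₀(t)⁻¹`, one has `J₀(0) = I` invertible, `C(0) = C₀`, and `C`
satisfies the Riccati equation `C′ = C² − I` wherever `J₀(t)` is invertible. -/
theorem stmt_2 (n : ℕ) (C₀ : Matrix (Fin n) (Fin n) ℝ)
    (J₀ : ℝ → Matrix (Fin n) (Fin n) ℝ)
    (hJ₀ : ∀ t : ℝ, J₀ t = Real.cosh t • (1 : Matrix (Fin n) (Fin n) ℝ) - Real.sinh t • C₀)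
    (C : ℝ → Matrix (Fin n) (Fin n) ℝ)
    (hC : ∀ t : ℝ, C t =
      -((Real.sinh t • (1 : Matrix (Fin n) (Fin n) ℝ) - Real.cosh t • C₀) * (J₀ t)⁻¹)) :
    J₀ 0 = 1 ∧ IsUnit (J₀ 0) ∧ C 0 = C₀ ∧
      ∀ t : ℝ, IsUnit (J₀ t) → HasDerivAt C (C t * C t - 1) t := by
  set A : ℝ → Matrix (Fin n) (Fin n) ℝ :=
    fun u => Real.sinh u • (1 : Matrix (Fin n) (Fin n) ℝ) - Real.cosh u • C₀ with hA
  set K : ℝ → Matrix (Fin n) (Fin n) ℝ := fun u => (J₀ u)⁻¹ with hK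
  have hJeq : J₀ = fun t => Real.cosh t • (1 : Matrix (Fin n) (Fin n) ℝ) - Real.sinh t • C₀ :=
    funext hJ₀
  have hJcont : Continuous J₀ := by
    rw [hJeq]
    exact (Real.continuous_cosh.smul continuous_const).sub
      (Real.continuous_sinh.smul continuous_const)
  have hJderiv : ∀ t : ℝ, HasDerivAt J₀ (A t) t := by
    intro t
    rw [hJeq]
    exact ((Real.hasDerivAt_cosh t).smul_const _).sub ((Real.hasDerivAt_sinh t).smul_const _)
  have hAderiv : ∀ t : ℝ, HasDerivAt A (J₀ t) t := by
    intro t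
    rw [hJ₀ t]
    exact ((Real.hasDerivAt_sinh t).smul_const _).sub ((Real.hasDerivAt_cosh t).smul_const _)
  have h1 : J₀ 0 = 1 := by rw [hJ₀]; simp
  have h2 : IsUnit (J₀ 0) := h1 ▸ isUnit_one
  have h3 : C 0 = C₀ := by rw [hC, h1]; simp
  refine ⟨h1, h2, h3, fun t ht => ?_⟩
  have hdet : IsUnit (J₀ t).det := (Matrix.isUnit_iff_isUnit_det _).mp ht
  have hdetne : (J₀ t).det ≠ 0 := isUnit_iff_ne_zero.mp hdet
  have hev : ∀ᶠ s in nhds t, (J₀ s).det ≠ 0 :=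
    (hJcont.matrix_det.continuousAt).eventually_ne hdetne
  have hKcont : ContinuousAt K t :=
    (continuousAt_matrix_inv (J₀ t)
      (by rw [Ring.inverse_eq_inv']; exact continuousAt_inv₀ hdetne)).comp
      hJcont.continuousAt
  have hJK : J₀ t * K t = 1 := Matrix.mul_nonsing_inv _ hdet
  have hKJ : K t * J₀ t = 1 := Matrix.nonsing_inv_mul _ hdet
  have hKderiv : HasDerivAt K (-(K t * A t * K t)) t := by
    refine hasDerivAt_iff_tendsto_slope.mpr ?_
    have hslope : Filter.Tendsto (slope J₀ t) (nhdsWithin t {t}ᶜ) (nhds (A t)) :=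
      hasDerivAt_iff_tendsto_slope.mp (hJderiv t)
    have hKt : Filter.Tendsto K (nhdsWithin t {t}ᶜ) (nhds (K t)) :=
      hKcont.tendsto.mono_left nhdsWithin_le_nhds
    have heq : ∀ᶠ s in nhdsWithin t {t}ᶜ,
        K s * (-(slope J₀ t s)) * K t = slope K t s := by
      filter_upwards [hev.filter_mono nhdsWithin_le_nhds] with s hs
      have hus : IsUnit (J₀ s).det := isUnit_iff_ne_zero.mpr hs
      have hKsJs : K s * J₀ s = 1 := Matrix.nonsing_inv_mul _ hus
      have key : K s - K t = K s * (J₀ t - J₀ s) * K t := by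
        rw [Matrix.mul_sub, Matrix.sub_mul, mul_assoc, hJK, mul_one,
          hKsJs, one_mul]
      have e1 : slope K t s = (s - t)⁻¹ • (K s * (J₀ t - J₀ s) * K t) := by
        rw [slope_def_module, key]
      have e2 : -(slope J₀ t s) = (s - t)⁻¹ • (J₀ t - J₀ s) := by
        rw [slope_def_module, ← smul_neg, neg_sub]
      rw [e1, e2, Matrix.mul_smul, Matrix.smul_mul]
    have hlim : Filter.Tendsto (fun s => K s * (-(slope J₀ t s)) * K t)
        (nhdsWithin t {t}ᶜ) (nhds (K t * (-(A t)) * K t)) :=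
      (hKt.mul hslope.neg).mul tendsto_const_nhds
    have : K t * (-(A t)) * K t = -(K t * A t * K t) := by
      rw [Matrix.mul_neg, Matrix.neg_mul]
    rw [this] at hlim
    exact Filter.Tendsto.congr' heq hlim
  have hmul : HasDerivAt (fun u => -(A u * K u))
      (-(J₀ t * K t + A t * -(K t * A t * K t))) t :=
    (matMul_hasDerivAt (hAderiv t) hKderiv).neg
  have hCt : C t = -(A t * K t) := hC t
  have hval : -(J₀ t * K t + A t * -(K t * A t * K t)) = C t * C t - 1 := by
    rw [hCt, hJK]
    noncomm_ring
  rw [hval] at hmul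
  exact hmul.congr_of_eventuallyEq (Filter.Eventually.of_forall fun u => hC u)
end

section
/- Let n be a natural number and let C : ℝ → Matrix n n ℝ be a differentiable matrix-valued function satisfying the Riccati equation deriv C t = C(t) * C(t) − 1 for all t ∈ ℝ, where 1 is the identity matrix. Then for every t ∈ ℝ the matrix (cosh t) • 1 − (sinh t) • C(0) is invertible and C(t) = −((sinh t) • 1 − (cosh t) • C(0)) * ((cosh t) • 1 − (sinh t) • C(0))⁻¹. -/
open Matrix

attribute [local instance] Matrix.normedAddCommGroup Matrix.normedSpace

/-- Proposition 3.1: a globally defined solution of the matrix Riccati equation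
`C′ = C² − I` is given by `C(t) = −J₀′(t) J₀(t)⁻¹` with
`J₀(t) = (cosh t) I − (sinh t) C(0)`, and `J₀(t)` is invertible for all `t`. -/
theorem stmt_3 (n : ℕ) (C : ℝ → Matrix (Fin n) (Fin n) ℝ)
    (hdiff : Differentiable ℝ C)
    (hderiv : ∀ t : ℝ, deriv C t = C t * C t - 1) :
    ∀ t : ℝ,
      IsUnit (Real.cosh t • (1 : Matrix (Fin n) (Fin n) ℝ) - Real.sinh t • C 0) ∧
      C t = -((Real.sinh t • (1 : Matrix (Fin n) (Fin n) ℝ) - Real.cosh t • C 0) *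
        (Real.cosh t • (1 : Matrix (Fin n) (Fin n) ℝ) - Real.sinh t • C 0)⁻¹) := by
  -- a norm bound for matrix products in the entrywise sup norm
  have hnorm : ∀ A B : Matrix (Fin n) (Fin n) ℝ, ‖A * B‖ ≤ n * ‖A‖ * ‖B‖ := by
    intro A B
    rw [Matrix.norm_le_iff (by positivity)]
    intro i j
    calc ‖(A * B) i j‖ = |∑ k, A i k * B k j| := rfl
      _ ≤ ∑ k, |A i k * B k j| := Finset.abs_sum_le_sum_abs _ _
      _ ≤ ∑ _k : Fin n, ‖A‖ * ‖B‖ := by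
          refine Finset.sum_le_sum fun k _ => ?_
          rw [abs_mul]
          exact mul_le_mul A.norm_entry_le_entrywise_sup_norm
            B.norm_entry_le_entrywise_sup_norm (abs_nonneg _) (norm_nonneg _)
      _ = n * ‖A‖ * ‖B‖ := by simp [mul_assoc]
  set F : ℝ → Matrix (Fin n) (Fin n) ℝ := fun s => Real.cosh s • (1 : Matrix (Fin n) (Fin n) ℝ) + Real.sinh s • C s with hFdef
  set G : ℝ → Matrix (Fin n) (Fin n) ℝ := fun s => Real.sinh s • (1 : Matrix (Fin n) (Fin n) ℝ) + Real.cosh s • C s with hGdef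
  have hF : ∀ s : ℝ, HasDerivAt F (C s * F s) s := by
    intro t
    have h1 : HasDerivAt (fun s => Real.cosh s • (1 : Matrix (Fin n) (Fin n) ℝ))
        (Real.sinh t • (1 : Matrix (Fin n) (Fin n) ℝ)) t := (Real.hasDerivAt_cosh t).smul_const _
    have h2 : HasDerivAt (fun s => Real.sinh s • C s)
        (Real.sinh t • (C t * C t - 1) + Real.cosh t • C t) t := by
      have := (Real.hasDerivAt_sinh t).smul ((hdiff t).hasDerivAt)
      erw [hderiv t] at this; exact this
    have := h1.add h2
    refine this.congr_deriv ?_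
    simp only [hFdef, smul_sub, mul_add, mul_smul_comm, mul_one, smul_smul]
    module
  have hG : ∀ s : ℝ, HasDerivAt G (C s * G s) s := by
    intro t
    have h1 : HasDerivAt (fun s => Real.sinh s • (1 : Matrix (Fin n) (Fin n) ℝ))
        (Real.cosh t • (1 : Matrix (Fin n) (Fin n) ℝ)) t := (Real.hasDerivAt_sinh t).smul_const _
    have h2 : HasDerivAt (fun s => Real.cosh s • C s)
        (Real.cosh t • (C t * C t - 1) + Real.sinh t • C t) t := by
      have := (Real.hasDerivAt_cosh t).smul ((hdiff t).hasDerivAt)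
      erw [hderiv t] at this; exact this
    have := h1.add h2
    refine this.congr_deriv ?_
    simp only [hGdef, smul_sub, mul_add, mul_smul_comm, mul_one, smul_smul]
    module
  -- right multiplication by C 0 as a continuous linear map
  let R : Matrix (Fin n) (Fin n) ℝ →L[ℝ] Matrix (Fin n) (Fin n) ℝ := LinearMap.toContinuousLinearMap (LinearMap.mulRight ℝ (C 0))
  have hg' : ∀ s : ℝ, HasDerivAt (fun s => F s * C 0) (C s * (F s * C 0)) s := by
    intro s
    have := R.hasFDerivAt.comp_hasDerivAt s (hF s)
    refine this.congr_deriv ?_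
    exact mul_assoc (C s) (F s) (C 0)
  -- key identity: G t = F t * C 0
  have key : ∀ t : ℝ, G t = F t * C 0 := by
    intro t₁
    set T : ℝ := |t₁| + 1 with hTdef
    have hT0 : (0 : ℝ) < T := by positivity
    obtain ⟨M₀, hM₀⟩ := (isCompact_Icc : IsCompact (Set.Icc (-T) T)).exists_bound_of_continuousOn
      (hdiff.continuous.continuousOn (s := Set.Icc (-T) T))
    have hM₀0 : 0 ≤ M₀ := le_trans (norm_nonneg _) (hM₀ 0 ⟨by linarith, by linarith⟩)
    set K : NNReal := Real.toNNReal (n * M₀) with hKdef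
    -- clamp to the interval
    set cl : ℝ → ℝ := fun s => max (-T) (min T s) with hcl
    have hclmem : ∀ s, cl s ∈ Set.Icc (-T) T := by
      intro s
      constructor
      · exact le_max_left _ _
      · exact max_le (by linarith) (min_le_left _ _)
    have hclid : ∀ s ∈ Set.Ioo (-T) T, cl s = s := by
      intro s hs
      simp only [hcl]
      rw [min_eq_right hs.2.le, max_eq_right hs.1.le]
    set v : ℝ → Matrix (Fin n) (Fin n) ℝ → Matrix (Fin n) (Fin n) ℝ := fun s X => C (cl s) * X with hv'
    have hv : ∀ s, LipschitzWith K (v s) := by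
      intro s
      apply LipschitzWith.of_dist_le_mul
      intro X Y
      have h1 : v s X - v s Y = C (cl s) * (X - Y) := by
        simp [hv', mul_sub]
      rw [dist_eq_norm, dist_eq_norm, h1]
      calc ‖C (cl s) * (X - Y)‖ ≤ n * ‖C (cl s)‖ * ‖X - Y‖ := hnorm _ _
        _ ≤ n * M₀ * ‖X - Y‖ := by
            have := hM₀ _ (hclmem s)
            gcongr
        _ ≤ (K : ℝ) * ‖X - Y‖ := by
            have : (K : ℝ) = max (n * M₀) 0 := by
              rw [hKdef]; exact Real.coe_toNNReal' _
            rw [this]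
            exact mul_le_mul_of_nonneg_right (le_max_left _ _) (norm_nonneg _)
    have heqon := ODE_solution_unique_of_mem_Icc
      (v := v) (s := fun _ => Set.univ) (K := K)
      (fun s _ => (hv s).lipschitzOnWith)
      (t₀ := 0) (a := -T) (b := T) ⟨by linarith, hT0⟩
      (fun s _ => ((hG s).continuousAt.continuousWithinAt))
      (fun s hs => by rw [hv']; simp only [hclid s hs]; exact hG s)
      (fun _ _ => Set.mem_univ _)
      (fun s _ => ((hg' s).continuousAt.continuousWithinAt))
      (fun s hs => by rw [hv']; simp only [hclid s hs]; exact hg' s)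
      (fun _ _ => Set.mem_univ _)
      (by simp [hFdef, hGdef])
    have ht₁ : t₁ ∈ Set.Icc (-T) T := by
      constructor
      · have := neg_abs_le t₁; linarith
      · have := le_abs_self t₁; linarith
    exact heqon ht₁
  -- conclusion
  intro t
  set J : Matrix (Fin n) (Fin n) ℝ := Real.cosh t • (1 : Matrix (Fin n) (Fin n) ℝ) - Real.sinh t • C 0 with hJdef
  set A : Matrix (Fin n) (Fin n) ℝ := Real.sinh t • (1 : Matrix (Fin n) (Fin n) ℝ) - Real.cosh t • C 0 with hAdef
  have hcs : Real.cosh t * Real.cosh t - Real.sinh t * Real.sinh t = 1 := by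
    have := Real.cosh_sq_sub_sinh_sq t; nlinarith [this]
  have hFJ : F t * J = 1 := by
    have e1 : F t * J = Real.cosh t • F t - Real.sinh t • G t := by
      rw [hJdef, mul_sub, mul_smul_comm, mul_smul_comm, mul_one, ← key t]
    rw [e1]
    have e2 : Real.cosh t • F t - Real.sinh t • G t
        = (Real.cosh t * Real.cosh t - Real.sinh t * Real.sinh t) • (1 : Matrix (Fin n) (Fin n) ℝ) := by
      simp only [hFdef, hGdef]
      module
    rw [e2, hcs, one_smul]
  have hJF : J * F t = 1 := mul_eq_one_comm.mp hFJ
  have hUnit : IsUnit J := ⟨⟨J, F t, hJF, hFJ⟩, rfl⟩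
  have hinv : J⁻¹ = F t := Matrix.inv_eq_right_inv hJF
  have hJA : J * A = A * J := by
    simp only [hJdef, hAdef, mul_sub, sub_mul, smul_mul_assoc, mul_smul_comm, mul_one, one_mul,
      smul_smul]
    module
  have hcomm : A * F t = F t * A := by
    calc A * F t = (F t * J) * (A * F t) := by rw [hFJ, one_mul]
      _ = F t * ((J * A) * F t) := by rw [mul_assoc, ← mul_assoc J A (F t)]
      _ = F t * ((A * J) * F t) := by rw [hJA]
      _ = F t * (A * (J * F t)) := by rw [mul_assoc]
      _ = F t * A := by rw [hJF, mul_one]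
  have hFA : F t * A = -C t := by
    have e1 : F t * A = Real.sinh t • F t - Real.cosh t • G t := by
      rw [hAdef, mul_sub, mul_smul_comm, mul_smul_comm, mul_one, ← key t]
    rw [e1]
    have e2 : Real.sinh t • F t - Real.cosh t • G t
        = (Real.sinh t * Real.sinh t - Real.cosh t * Real.cosh t) • C t := by
      simp only [hFdef, hGdef]
      module
    rw [e2]
    have : Real.sinh t * Real.sinh t - Real.cosh t * Real.cosh t = -1 := by linarith
    rw [this, neg_one_smul]
  refine ⟨hUnit, ?_⟩
  rw [hinv, hcomm, hFA, neg_neg]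
end

section
/- Let n be a natural number and let C : ℝ → Matrix n n ℝ be a differentiable matrix-valued function satisfying deriv C t = C(t) * C(t) − 1 for all t ∈ ℝ, where 1 is the identity matrix. Then every real eigenvalue λ of C(0) — that is, every λ ∈ ℝ for which there exists a nonzero vector v with C(0) *ᵥ v = λ • v — satisfies |λ| ≤ 1. -/
open Matrix Set

attribute [local instance] Matrix.normedAddCommGroup Matrix.normedSpace

namespace Stmt4Aux

variable {n : ℕ}

/-- `M ↦ M *ᵥ w` as a continuous linear map. -/
noncomputable def mvw (n : ℕ) (w : Fin n → ℝ) :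
    Matrix (Fin n) (Fin n) ℝ →L[ℝ] (Fin n → ℝ) :=
  LinearMap.toContinuousLinearMap
    { toFun := fun M => M *ᵥ w
      map_add' := fun A B => Matrix.add_mulVec A B w
      map_smul' := fun c A => Matrix.smul_mulVec c A w }

@[simp] lemma mvw_apply (w : Fin n → ℝ) (M : Matrix (Fin n) (Fin n) ℝ) :
    mvw n w M = M *ᵥ w := rfl

/-- `M ↦ (x ↦ M *ᵥ x)` as a linear map into continuous linear maps. -/
noncomputable def mvL (n : ℕ) :
    Matrix (Fin n) (Fin n) ℝ →ₗ[ℝ] ((Fin n → ℝ) →L[ℝ] (Fin n → ℝ)) where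
  toFun M := LinearMap.toContinuousLinearMap M.mulVecLin
  map_add' A B := by
    ext x
    simp [Matrix.add_mulVec]
  map_smul' c A := by
    ext x
    simp [Matrix.smul_mulVec]

@[simp] lemma mvL_apply (M : Matrix (Fin n) (Fin n) ℝ) (x : Fin n → ℝ) :
    mvL n M x = M *ᵥ x := rfl

lemma key (n : ℕ) (C : ℝ → Matrix (Fin n) (Fin n) ℝ)
    (hdiff : Differentiable ℝ C)
    (hderiv : ∀ t : ℝ, deriv C t = C t * C t - 1)
    (lam : ℝ) (v : Fin n → ℝ) (hv : v ≠ 0) (heig : C 0 *ᵥ v = lam • v)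
    (hlam : 1 < lam) : False := by
  have hCd : ∀ t, HasDerivAt C (C t * C t - 1) t := fun t => by
    rw [← hderiv t]
    exact (hdiff t).hasDerivAt
  -- scalar coefficient functions
  set a : ℝ → ℝ := fun t => Real.cosh t - lam * Real.sinh t with ha_def
  set b : ℝ → ℝ := fun t => lam * Real.cosh t - Real.sinh t with hb_def
  set g : ℝ → (Fin n → ℝ) := fun t => a t • (C t *ᵥ v) - b t • v with hg_def
  have haD : ∀ t, HasDerivAt a (-(b t)) t := fun t => by
    have h := (Real.hasDerivAt_cosh t).sub ((Real.hasDerivAt_sinh t).const_mul lam)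
    exact h.congr_deriv (by simp only [hb_def]; ring)
  have hbD : ∀ t, HasDerivAt b (-(a t)) t := fun t => by
    have h := ((Real.hasDerivAt_cosh t).const_mul lam).sub (Real.hasDerivAt_sinh t)
    exact h.congr_deriv (by simp only [ha_def]; ring)
  have h1 : ∀ t, HasDerivAt (fun s => C s *ᵥ v) ((C t * C t - 1) *ᵥ v) t := fun t => by
    have h := (mvw n v).hasFDerivAt.comp_hasDerivAt t (hCd t)
    exact h
  have hgD : ∀ t, HasDerivAt g (C t *ᵥ g t) t := fun t => by
    have h := ((haD t).smul (h1 t)).sub ((hbD t).smul_const v)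
    refine h.congr_deriv (Eq.symm ?_)
    simp only [hg_def, Matrix.mulVec_sub, Matrix.mulVec_smul, Matrix.sub_mulVec,
      Matrix.one_mulVec, ← Matrix.mulVec_mulVec]
    module
  -- the time horizon
  set T : ℝ := 1 / (lam - 1) + 1 with hT_def
  have hlam1 : (0 : ℝ) < lam - 1 := by linarith
  have hT : 0 < T := by positivity
  -- the clamped vector field is globally Lipschitz
  set proj : ℝ → ℝ := fun t => max 0 (min t T) with hproj_def
  have hprojmem : ∀ t, proj t ∈ Icc 0 T := fun t =>
    ⟨le_max_left _ _, max_le hT.le (min_le_right _ _)⟩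
  have hprojeq : ∀ t ∈ Icc 0 T, proj t = t := fun t ht => by
    simp [hproj_def, min_eq_left ht.2, max_eq_right ht.1]
  have hcont : Continuous fun t => ‖mvL n (C (proj t))‖ := by
    have h1 : Continuous proj := continuous_const.max (continuous_id.min continuous_const)
    have h2 : Continuous (mvL n) := (mvL n).continuous_of_finiteDimensional
    exact (h2.comp (hdiff.continuous.comp h1)).norm
  obtain ⟨K, hK⟩ := (isCompact_Icc (a := (0:ℝ)) (b := T)).exists_bound_of_continuousOn
    hcont.continuousOn
  have hLip : ∀ t, LipschitzWith K.toNNReal (fun x => C (proj t) *ᵥ x) := fun t => by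
    have h := (mvL n (C (proj t))).lipschitz
    have hb : ‖mvL n (C (proj t))‖₊ ≤ K.toNNReal := by
      have h2 : ‖mvL n (C (proj t))‖ ≤ K := by
        have h3 := hK (proj t) (hprojmem t)
        rw [hprojeq (proj t) (hprojmem t)] at h3
        simpa using h3
      simpa [← norm_toNNReal] using Real.toNNReal_mono h2
    have heq : (fun x => C (proj t) *ᵥ x) = ⇑(mvL n (C (proj t))) := rfl
    rw [heq]
    exact h.weaken hb
  -- uniqueness: g vanishes on [0, T]
  have hg0 : g 0 = 0 := by
    simp [hg_def, ha_def, hb_def, heig]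
  have huniq : EqOn g (fun _ => (0 : Fin n → ℝ)) (Icc 0 T) := by
    apply ODE_solution_unique (v := fun t x => C (proj t) *ᵥ x) hLip
    · exact fun t _ => (hgD t).continuousAt.continuousWithinAt
    · intro t ht
      rw [hprojeq t (Ico_subset_Icc_self ht)]
      exact (hgD t).hasDerivWithinAt
    · exact continuousOn_const
    · intro t ht
      simpa using (hasDerivWithinAt_const t (Ici t) (0 : Fin n → ℝ))
    · simpa using hg0
  -- find t₀ with a t₀ = 0 via IVT
  have haCont : Continuous a := by
    exact Real.continuous_cosh.sub (continuous_const.mul Real.continuous_sinh)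
  have haT : a T < 0 := by
    have hs : T < Real.sinh T := Real.self_lt_sinh_iff.mpr hT
    have he : Real.exp (-T) ≤ 1 := Real.exp_le_one_iff.mpr (by linarith)
    have hcs : Real.cosh T - Real.sinh T = Real.exp (-T) := Real.cosh_sub_sinh T
    have hTbig : (lam - 1) * T = 1 + (lam - 1) := by
      rw [hT_def]
      field_simp
    have hmul := mul_lt_mul_of_pos_left hs hlam1
    simp only [ha_def]
    nlinarith
  have h0mem : (0 : ℝ) ∈ Icc (a T) (a 0) := by
    constructor
    · exact haT.le
    · simp [ha_def]
  obtain ⟨t₀, ht₀mem, ht₀⟩ := intermediate_value_Icc' hT.le haCont.continuousOn h0mem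
  -- contradiction
  have hgt₀ : g t₀ = 0 := huniq ht₀mem
  have hbt₀ : b t₀ • v = 0 := by
    have := hgt₀
    rw [hg_def] at this
    simp only [ht₀, zero_smul, zero_sub, neg_eq_zero] at this
    exact this
  have hb0 : b t₀ = 0 := by
    rcases smul_eq_zero.mp hbt₀ with h | h
    · exact h
    · exact absurd h hv
  -- but b t₀ = (lam² - 1) * sinh t₀ > 0
  have hch : Real.cosh t₀ = lam * Real.sinh t₀ := by
    have := ht₀
    simp only [ha_def] at this
    linarith
  have hcosh : (1 : ℝ) ≤ Real.cosh t₀ := Real.one_le_cosh t₀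
  have hsinh : 0 < Real.sinh t₀ := by nlinarith
  have : b t₀ = (lam * lam - 1) * Real.sinh t₀ := by
    simp only [hb_def]; rw [hch]; ring
  nlinarith

end Stmt4Aux

/-- Final assertion of Proposition 3.1: if the matrix Riccati equation
`C′ = C² − I` is satisfied for all `t ∈ ℝ`, then every real eigenvalue `λ` of
`C(0)` satisfies `|λ| ≤ 1`. -/
theorem stmt_4 (n : ℕ) (C : ℝ → Matrix (Fin n) (Fin n) ℝ)
    (hdiff : Differentiable ℝ C)
    (hderiv : ∀ t : ℝ, deriv C t = C t * C t - 1)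
    (lam : ℝ) (v : Fin n → ℝ) (hv : v ≠ 0) (heig : C 0 *ᵥ v = lam • v) :
    |lam| ≤ 1 := by
  by_contra h
  push_neg at h
  rcases lt_abs.mp h with hgt | hgt
  · exact Stmt4Aux.key n C hdiff hderiv lam v hv heig hgt
  · -- lam < -1 : use the reflected solution t ↦ -C (-t)
    set C₂ : ℝ → Matrix (Fin n) (Fin n) ℝ := fun t => -C (-t) with hC₂
    have hCd : ∀ t, HasDerivAt C (C t * C t - 1) t := fun t => by
      rw [← hderiv t]
      exact (hdiff t).hasDerivAt
    have hC₂d : ∀ t, HasDerivAt C₂ (C₂ t * C₂ t - 1) t := fun t => by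
      have h1 : HasDerivAt (fun s : ℝ => C (-s))
          ((-1 : ℝ) • (C (-t) * C (-t) - 1)) t :=
        (hCd (-t)).scomp t (hasDerivAt_neg t)
      have h2 := h1.neg
      refine h2.congr_deriv (Eq.symm ?_)
      simp [hC₂, neg_mul_neg]
    have hdiff₂ : Differentiable ℝ C₂ := fun t => (hC₂d t).differentiableAt
    have hderiv₂ : ∀ t, deriv C₂ t = C₂ t * C₂ t - 1 := fun t => (hC₂d t).deriv
    have heig₂ : C₂ 0 *ᵥ v = (-lam) • v := by
      simp [hC₂, Matrix.neg_mulVec, heig]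
    exact Stmt4Aux.key n C₂ hdiff₂ hderiv₂ (-lam) v hv heig₂ hgt
end

section
/- Let c : ℝ → ℝ be a differentiable function satisfying the scalar Riccati equation deriv c t = (c t)² − 1 for all t ∈ ℝ. Then |c(t)| ≤ 1 for all t ∈ ℝ. -/
/-- Invariance: once a Riccati solution is above 1, it stays above 1 forward in time. -/
lemma riccati_stays_above (c : ℝ → ℝ) (hdiff : Differentiable ℝ c)
    (hderiv : ∀ t : ℝ, deriv c t = (c t) ^ 2 - 1) (t₀ : ℝ) (h₀ : 1 < c t₀) :
    ∀ t ≥ t₀, 1 < c t := by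
  intro t ht
  by_contra hle
  push_neg at hle
  set T : Set ℝ := {s | s ∈ Set.Icc t₀ t ∧ c s ≤ 1} with hT
  have hTne : T.Nonempty := ⟨t, ⟨⟨ht, le_rfl⟩, hle⟩⟩
  have hTclosed : IsClosed T :=
    (isClosed_Icc).inter (isClosed_le hdiff.continuous continuous_const)
  have hbdd : BddBelow T := ⟨t₀, fun x hx => hx.1.1⟩
  have hsmem : sInf T ∈ T := hTclosed.csInf_mem hTne hbdd
  set s := sInf T with hs
  have hst₀ : t₀ ≤ s := hsmem.1.1
  have hst : s ≤ t := hsmem.1.2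
  have hcs : c s ≤ 1 := hsmem.2
  have ht₀s : t₀ < s := by
    rcases lt_or_eq_of_le hst₀ with h | h
    · exact h
    · exfalso; rw [← h] at hcs; linarith
  have hIco : ∀ u ∈ Set.Ico t₀ s, 1 < c u := by
    intro u hu
    by_contra hcu
    push_neg at hcu
    have huT : u ∈ T := ⟨⟨hu.1, le_trans (le_of_lt hu.2) hst⟩, hcu⟩
    exact absurd (csInf_le hbdd huT) (not_le.mpr hu.2)
  have hmono : StrictMonoOn c (Set.Icc t₀ s) := by
    apply strictMonoOn_of_deriv_pos (convex_Icc t₀ s) hdiff.continuous.continuousOn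
    intro u hu
    rw [interior_Icc] at hu
    have h1 : 1 < c u := hIco u ⟨le_of_lt hu.1, hu.2⟩
    rw [hderiv u]
    nlinarith
  have : c t₀ < c s := hmono ⟨le_rfl, le_of_lt ht₀s⟩ ⟨le_of_lt ht₀s, le_rfl⟩ ht₀s
  linarith

/-- A globally defined Riccati solution is bounded above by 1. -/
lemma riccati_le_one (c : ℝ → ℝ) (hdiff : Differentiable ℝ c)
    (hderiv : ∀ t : ℝ, deriv c t = (c t) ^ 2 - 1) :
    ∀ t : ℝ, c t ≤ 1 := by
  by_contra hcon
  push_neg at hcon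
  obtain ⟨t₀, h₀⟩ := hcon
  have hinv : ∀ t ≥ t₀, 1 < c t := riccati_stays_above c hdiff hderiv t₀ h₀
  set g : ℝ → ℝ := fun s => (c s - 1) / (c s + 1) with hgdef
  set h : ℝ → ℝ := fun s => g s * Real.exp (-2 * s) with hhdef
  -- derivative of g where c > 1
  have hg : ∀ u : ℝ, 1 < c u → HasDerivAt g (2 * g u) u := by
    intro u hu
    have hne : c u + 1 ≠ 0 := by linarith
    have hc : HasDerivAt c ((c u) ^ 2 - 1) u := hderiv u ▸ (hdiff u).hasDerivAt
    have hq := (hc.sub_const 1).div (hc.add_const 1) hne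
    have key : (((c u) ^ 2 - 1) * (c u + 1) - (c u - 1) * ((c u) ^ 2 - 1)) / (c u + 1) ^ 2
        = 2 * ((c u - 1) / (c u + 1)) := by
      field_simp
      ring
    rw [key] at hq
    exact hq
  -- derivative of h is zero where c > 1
  have hh : ∀ u : ℝ, 1 < c u → HasDerivAt h 0 u := by
    intro u hu
    have hlin : HasDerivAt (fun s : ℝ => -2 * s) (-2) u := by
      simpa using (hasDerivAt_id u).const_mul (-2 : ℝ)
    have hexp : HasDerivAt (fun s : ℝ => Real.exp (-2 * s))
        (Real.exp (-2 * u) * (-2)) u := hlin.exp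
    have : HasDerivAt h (2 * g u * Real.exp (-2 * u) + g u * (Real.exp (-2 * u) * -2)) u :=
      (hg u hu).mul hexp
    convert this using 1
    ring
  -- h is constant on [t₀, ∞)
  have hconst : ∀ t₁ ≥ t₀, h t₁ = h t₀ := by
    intro t₁ ht₁
    have hcont : ContinuousOn h (Set.Icc t₀ t₁) := by
      apply ContinuousOn.mul
      · apply ContinuousOn.div
        · exact (hdiff.continuous.sub continuous_const).continuousOn
        · exact (hdiff.continuous.add continuous_const).continuousOn
        · intro u hu
          have := hinv u hu.1
          linarith
      · exact (Real.continuous_exp.comp (continuous_const.mul continuous_id)).continuousOn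
    have hd : ∀ x ∈ Set.Ico t₀ t₁, HasDerivWithinAt h 0 (Set.Ici x) x := by
      intro x hx
      exact (hh x (hinv x hx.1)).hasDerivWithinAt
    exact constant_of_has_deriv_right_zero hcont hd t₁ ⟨ht₁, le_rfl⟩
  -- basic facts about g t₀
  have hct₀ : 1 < c t₀ := h₀
  have hg₀pos : 0 < g t₀ := by
    apply div_pos <;> linarith
  have hg₀lt : g t₀ < 1 := by
    rw [hgdef]
    rw [div_lt_one (by linarith : (0:ℝ) < c t₀ + 1)]
    linarith
  -- choose a large time
  set t₁ : ℝ := t₀ + Real.log (1 / g t₀) / 2 + 1 with ht₁def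
  have hlogpos : 0 < Real.log (1 / g t₀) := by
    apply Real.log_pos
    rw [lt_div_iff₀ hg₀pos]
    linarith
  have ht₁ge : t₀ ≤ t₁ := by simp only [ht₁def]; linarith
  have hct₁ : 1 < c t₁ := hinv t₁ ht₁ge
  have hgt₁lt : g t₁ < 1 := by
    rw [hgdef]
    rw [div_lt_one (by linarith : (0:ℝ) < c t₁ + 1)]
    linarith
  -- compute g t₁ from constancy of h
  have heq : h t₁ = h t₀ := hconst t₁ ht₁ge
  have hgt₁ : g t₁ = g t₀ * Real.exp (2 * (t₁ - t₀)) := by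
    have e1 : Real.exp (-2 * t₁) ≠ 0 := (Real.exp_pos _).ne'
    have h1 : g t₁ * Real.exp (-2 * t₁) = g t₀ * Real.exp (-2 * t₀) := heq
    have h2 : Real.exp (2 * (t₁ - t₀)) * Real.exp (-2 * t₁) = Real.exp (-2 * t₀) := by
      rw [← Real.exp_add]
      congr 1
      ring
    apply mul_right_cancel₀ e1
    rw [h1, mul_assoc, h2]
  have hexpeq : Real.exp (2 * (t₁ - t₀)) = (1 / g t₀) * Real.exp 2 := by
    have : 2 * (t₁ - t₀) = Real.log (1 / g t₀) + 2 := by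
      simp only [ht₁def]; ring
    rw [this, Real.exp_add, Real.exp_log (by positivity)]
  have : g t₁ = Real.exp 2 := by
    rw [hgt₁, hexpeq]
    field_simp
  have h2 : (1:ℝ) < Real.exp 2 := by
    have := Real.add_one_le_exp (2:ℝ)
    linarith
  linarith [hgt₁lt, this ▸ h2]

/-- Scalar Riccati lemma: a solution of `c′ = c² − 1` defined on all of `ℝ`
satisfies `|c(t)| ≤ 1` for all `t`. -/
theorem stmt_5 (c : ℝ → ℝ) (hdiff : Differentiable ℝ c)
    (hderiv : ∀ t : ℝ, deriv c t = (c t) ^ 2 - 1) :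
    ∀ t : ℝ, |c t| ≤ 1 := by
  intro t
  rw [abs_le]
  constructor
  · -- lower bound via the reflected solution d s = -c (-s)
    set d : ℝ → ℝ := fun s => -c (-s) with hd
    have hdd : Differentiable ℝ d := (hdiff.comp (differentiable_neg)).neg
    have hdderiv : ∀ s : ℝ, deriv d s = (d s) ^ 2 - 1 := by
      intro s
      have hc : HasDerivAt c ((c (-s)) ^ 2 - 1) (-s) := hderiv (-s) ▸ (hdiff (-s)).hasDerivAt
      have hneg : HasDerivAt (fun u : ℝ => -u) (-1) s := by
        exact hasDerivAt_neg s
      have hcomp : HasDerivAt (fun u => c (-u)) (((c (-s)) ^ 2 - 1) * (-1)) s :=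
        hc.comp s hneg
      have : HasDerivAt d ((d s) ^ 2 - 1) s := by
        have : HasDerivAt d (-(((c (-s)) ^ 2 - 1) * (-1))) s := hcomp.neg
        convert this using 1
        simp [hd]
        try ring
      exact this.deriv
    have := riccati_le_one d hdd hdderiv (-t)
    simp only [hd, neg_neg] at this
    linarith
  · exact riccati_le_one c hdiff hderiv t
end
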